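/- Let n ≥ 1, d ≥ 2 and let A = [a_ij] ∈ ℝ^{n×n} have nonnegative entries and be strictly diagonally dominant. Let x be a consensus configuration, i.e. x_1 = … = x_n = x̄ for some unit vector x̄ ∈ ℝ^d. Then every complex eigenvalue of the projected Jacobian J(x) has modulus at most 1, and 1 is an eigenvalue of J(x); that is, the maximal eigenvalue modulus equals 1 and no consensus point is an unstable fixed point (C ∩ U = ∅). -/

import Mathlib

open scoped BigOperators

noncomputable section

/-- The conical combination `Σ_j a_ij x_j`. -/
def consSum {n d : ℕ} (A : Matrix (Fin n) (Fin n) ℝ)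
    (x : Fin n → EuclideanSpace ℝ (Fin d)) (i : Fin n) : EuclideanSpace ℝ (Fin d) :=
  ∑ j, A i j • x j

/-- The consensus map `f_A`: projection of the conical combination onto the unit sphere. -/
def consMap {n d : ℕ} (A : Matrix (Fin n) (Fin n) ℝ)
    (x : Fin n → EuclideanSpace ℝ (Fin d)) (i : Fin n) : EuclideanSpace ℝ (Fin d) :=
  ‖consSum A x i‖⁻¹ • consSum A x i

/-- The block-diagonal projection matrix `P_x` with diagonal blocks `I_d − x_i x_iᵀ`. -/
def projBlock {n d : ℕ} (x : Fin n → EuclideanSpace ℝ (Fin d)) :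
    Matrix (Fin n × Fin d) (Fin n × Fin d) ℝ :=
  Matrix.of fun p q =>
    if p.1 = q.1 then (if p.2 = q.2 then (1 : ℝ) else 0) - x p.1 p.2 * x p.1 q.2 else 0

/-- The diagonal normalization matrix `D(AX)`, with `i`-th entry `‖Σ_j a_ij x_j‖⁻¹`. -/
def Dmat {n d : ℕ} (A : Matrix (Fin n) (Fin n) ℝ)
    (x : Fin n → EuclideanSpace ℝ (Fin d)) : Matrix (Fin n) (Fin n) ℝ :=
  Matrix.diagonal fun i => ‖consSum A x i‖⁻¹

/-- The projected Jacobian `J(x) = P_{f(x)} (D(AX)A ⊗ I_d) P_x`. -/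
def Jmat {n d : ℕ} (A : Matrix (Fin n) (Fin n) ℝ)
    (x : Fin n → EuclideanSpace ℝ (Fin d)) :
    Matrix (Fin n × Fin d) (Fin n × Fin d) ℝ :=
  projBlock (consMap A x) *
    Matrix.kroneckerMap (· * ·) (Dmat A x * A) (1 : Matrix (Fin d) (Fin d) ℝ) *
    projBlock x

/-- at a consensus configuration, every complex eigenvalue of the projected
Jacobian `J(x)` has modulus at most `1`, and `1` is an eigenvalue; hence no consensus point
is an unstable fixed point. -/
theorem stmt_8 (n d : ℕ) (hn : 1 ≤ n) (hd : 2 ≤ d)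
    (A : Matrix (Fin n) (Fin n) ℝ)
    (hApos : ∀ i j, 0 ≤ A i j)
    (hdd : ∀ i, ∑ j ∈ Finset.univ.erase i, A i j < A i i)
    (xbar : EuclideanSpace ℝ (Fin d)) (hxbar : ‖xbar‖ = 1) :
    (∀ (μ : ℂ) (v : Fin n × Fin d → ℂ), v ≠ 0 →
        ((Jmat A fun _ : Fin n => xbar).map Complex.ofReal).mulVec v = μ • v →
        ‖μ‖ ≤ 1) ∧
    ∃ v : Fin n × Fin d → ℂ, v ≠ 0 ∧
        ((Jmat A fun _ : Fin n => xbar).map Complex.ofReal).mulVec v = v := by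
  classical
  -- basic facts
  have hsum2 : ∑ m, xbar m ^ 2 = 1 := by
    have h := hxbar
    rw [EuclideanSpace.norm_eq] at h
    have h2 : ∑ i, ‖xbar i‖ ^ 2 = 1 := by
      have hnn : 0 ≤ ∑ i, ‖xbar i‖ ^ 2 :=
        Finset.sum_nonneg fun i _ => sq_nonneg _
      nlinarith [Real.sq_sqrt hnn]
    simpa [Real.norm_eq_abs, sq_abs] using h2
  set s : Fin n → ℝ := fun i => ∑ j, A i j with hsdef
  have hspos : ∀ i, 0 < s i := by
    intro i
    have h1 : 0 ≤ ∑ j ∈ Finset.univ.erase i, A i j :=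
      Finset.sum_nonneg fun j _ => hApos i j
    have h2 : s i = A i i + ∑ j ∈ Finset.univ.erase i, A i j :=
      (Finset.add_sum_erase _ _ (Finset.mem_univ i)).symm
    have := hdd i
    linarith
  set Qf : Fin d → Fin d → ℝ := fun k l => (if k = l then (1:ℝ) else 0) - xbar k * xbar l
    with hQdef
  have hQQ : ∀ k l, ∑ m, Qf k m * Qf m l = Qf k l := by
    intro k l
    have : ∀ m, Qf k m * Qf m l
        = (if k = m then (1:ℝ) else 0) * (if m = l then (1:ℝ) else 0)
          - (if k = m then (1:ℝ) else 0) * (xbar m * xbar l)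
          - (if m = l then (1:ℝ) else 0) * (xbar k * xbar m)
          + (xbar k * xbar l) * xbar m ^ 2 := by intro m; simp only [hQdef]; ring
    simp only [this]
    rw [Finset.sum_add_distrib, Finset.sum_sub_distrib, Finset.sum_sub_distrib,
      ← Finset.mul_sum, hsum2]
    simp [hQdef, Finset.sum_ite_eq, Finset.sum_ite_eq', mul_comm]
  have hcs : ∀ i, consSum A (fun _ : Fin n => xbar) i = s i • xbar := by
    intro i; simp [consSum, ← Finset.sum_smul, hsdef]
  have hns : ∀ i, ‖consSum A (fun _ : Fin n => xbar) i‖ = s i := by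
    intro i
    rw [hcs i, norm_smul, hxbar, Real.norm_of_nonneg (hspos i).le, mul_one]
  have hcm : consMap A (fun _ : Fin n => xbar) = fun _ => xbar := by
    funext i
    rw [consMap, hns i, hcs i, smul_smul, inv_mul_cancel₀ (hspos i).ne', one_smul]
  -- entrywise description of the Jacobian
  have hJ : ∀ p q : Fin n × Fin d, Jmat A (fun _ : Fin n => xbar) p q =
      ((s p.1)⁻¹ * A p.1 q.1) * Qf p.2 q.2 := by
    intro p q
    simp only [Jmat, hcm, Matrix.mul_apply, Fintype.sum_prod_type, projBlock,
      Matrix.kroneckerMap, Dmat, Matrix.of_apply, Matrix.one_apply, hns]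
    simp only [Matrix.diagonal_apply, ite_mul, zero_mul, mul_ite, mul_zero, mul_one,
      Finset.sum_ite_eq, Finset.sum_ite_eq', Finset.mem_univ, if_true]
    rw [Finset.sum_comm]
    simp only [Finset.sum_ite_eq', Finset.mem_univ, if_true]
    have : ∀ m : Fin d, ((if p.2 = m then (1:ℝ) else 0) - xbar p.2 * xbar m) *
        ((s p.1)⁻¹ * A p.1 q.1) * ((if m = q.2 then (1:ℝ) else 0) - xbar m * xbar q.2)
        = (Qf p.2 m * Qf m q.2) * ((s p.1)⁻¹ * A p.1 q.1) := by
      intro m; simp only [hQdef]; ring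
    simp only [this]
    rw [← Finset.sum_mul, hQQ]
    ring
  have hrow : ∀ i, ∑ j, (s i)⁻¹ * A i j = 1 := by
    intro i
    rw [← Finset.mul_sum]
    exact inv_mul_cancel₀ (hspos i).ne'
  have hmv : ∀ (v : Fin n × Fin d → ℂ) (p : Fin n × Fin d),
      ((Jmat A fun _ : Fin n => xbar).map Complex.ofReal).mulVec v p
        = ∑ j, ∑ l, (((s p.1)⁻¹ * A p.1 j : ℝ) : ℂ) * ((Qf p.2 l : ℝ) : ℂ) * v (j, l) := by
    intro v p
    rw [Matrix.mulVec, dotProduct, Fintype.sum_prod_type]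
    refine Finset.sum_congr rfl fun j _ => Finset.sum_congr rfl fun l _ => ?_
    rw [Matrix.map_apply, hJ p (j, l)]
    push_cast
    ring
  constructor
  · -- every eigenvalue has modulus at most 1
    intro μ v hv0 hv
    rcases eq_or_ne μ 0 with rfl | hμ
    · simp
    have hvE : ∀ p : Fin n × Fin d,
        ∑ j, ∑ l, (((s p.1)⁻¹ * A p.1 j : ℝ) : ℂ) * ((Qf p.2 l : ℝ) : ℂ) * v (j, l)
          = μ * v p := by
      intro p
      rw [← hmv v p, hv]; simp
    set w : Fin n × Fin d → ℂ := fun p => ∑ l, ((Qf p.2 l : ℝ) : ℂ) * v (p.1, l) with hwdef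
    have hQQC : ∀ k l : Fin d, ∑ m, ((Qf k m : ℝ) : ℂ) * ((Qf m l : ℝ) : ℂ)
        = ((Qf k l : ℝ) : ℂ) := by
      intro k l
      have := hQQ k l
      push_cast [← this]
      norm_num
    have hQw : ∀ (j : Fin n) (k : Fin d),
        ∑ m, ((Qf k m : ℝ) : ℂ) * w (j, m) = w (j, k) := by
      intro j k
      simp only [hwdef]
      calc ∑ m, ((Qf k m : ℝ) : ℂ) * ∑ l, ((Qf m l : ℝ) : ℂ) * v (j, l)
          = ∑ l, (∑ m, ((Qf k m : ℝ) : ℂ) * ((Qf m l : ℝ) : ℂ)) * v (j, l) := by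
            simp only [Finset.mul_sum, Finset.sum_mul]
            rw [Finset.sum_comm]
            exact Finset.sum_congr rfl fun m _ => Finset.sum_congr rfl fun l _ => by ring
        _ = ∑ l, ((Qf k l : ℝ) : ℂ) * v (j, l) := by
            exact Finset.sum_congr rfl fun l _ => by rw [hQQC]
    have hE1 : ∀ (i : Fin n) (k : Fin d),
        ∑ j, (((s i)⁻¹ * A i j : ℝ) : ℂ) * w (j, k) = μ * v (i, k) := by
      intro i k
      rw [← hvE (i, k)]
      exact Finset.sum_congr rfl fun j _ => by
        simp only [hwdef, Finset.mul_sum]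
        exact Finset.sum_congr rfl fun l _ => by ring
    have hwv : w = v := by
      funext p
      obtain ⟨i, k⟩ := p
      have h1 : ∑ m, ((Qf k m : ℝ) : ℂ) * (μ * v (i, m)) = μ * w (i, k) := by
        simp only [hwdef, Finset.mul_sum]
        exact Finset.sum_congr rfl fun m _ => by ring
      have h2 : ∑ m, ((Qf k m : ℝ) : ℂ) * (μ * v (i, m)) = μ * v (i, k) := by
        calc ∑ m, ((Qf k m : ℝ) : ℂ) * (μ * v (i, m))
            = ∑ m, ((Qf k m : ℝ) : ℂ) * ∑ j, (((s i)⁻¹ * A i j : ℝ) : ℂ) * w (j, m) := by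
              exact Finset.sum_congr rfl fun m _ => by rw [hE1 i m]
          _ = ∑ j, (((s i)⁻¹ * A i j : ℝ) : ℂ) * ∑ m, ((Qf k m : ℝ) : ℂ) * w (j, m) := by
              simp only [Finset.mul_sum]
              rw [Finset.sum_comm]
              exact Finset.sum_congr rfl fun m _ => Finset.sum_congr rfl fun j _ => by ring
          _ = ∑ j, (((s i)⁻¹ * A i j : ℝ) : ℂ) * w (j, k) := by
              exact Finset.sum_congr rfl fun j _ => by rw [hQw]
          _ = μ * v (i, k) := hE1 i k
      have := h1.symm.trans h2
      exact mul_left_cancel₀ hμ this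
    have hE3 : ∀ (i : Fin n) (k : Fin d),
        ∑ j, (((s i)⁻¹ * A i j : ℝ) : ℂ) * v (j, k) = μ * v (i, k) := by
      intro i k
      simpa [hwv] using hE1 i k
    -- maximum-modulus argument
    obtain ⟨p₀, -, hp₀⟩ := Finset.exists_max_image (Finset.univ : Finset (Fin n × Fin d))
      (fun p => ‖v p‖) ⟨(⟨0, hn⟩, ⟨0, by omega⟩), Finset.mem_univ _⟩
    have hvp₀ : 0 < ‖v p₀‖ := by
      obtain ⟨p, hp⟩ := Function.ne_iff.mp hv0
      have h1 : 0 < ‖v p‖ := by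
        simpa using (norm_pos_iff).mpr (by simpa using hp)
      exact lt_of_lt_of_le h1 (hp₀ p (Finset.mem_univ p))
    have key : ‖μ‖ * ‖v p₀‖ ≤ 1 * ‖v p₀‖ := by
      rw [← norm_mul, ← hE3 p₀.1 p₀.2, one_mul]
      calc ‖∑ j, (((s p₀.1)⁻¹ * A p₀.1 j : ℝ) : ℂ) * v (j, p₀.2)‖
          ≤ ∑ j, ‖(((s p₀.1)⁻¹ * A p₀.1 j : ℝ) : ℂ) * v (j, p₀.2)‖ :=
            norm_sum_le _ _
        _ ≤ ‖v p₀‖ := by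
            have h1 : ∀ j, ‖(((s p₀.1)⁻¹ * A p₀.1 j : ℝ) : ℂ) * v (j, p₀.2)‖
                ≤ ((s p₀.1)⁻¹ * A p₀.1 j) * ‖v p₀‖ := by
              intro j
              rw [norm_mul, Complex.norm_real, Real.norm_eq_abs,
                abs_of_nonneg (mul_nonneg (inv_nonneg.mpr (hspos p₀.1).le) (hApos p₀.1 j))]
              exact mul_le_mul_of_nonneg_left (hp₀ (j, p₀.2) (Finset.mem_univ _))
                (mul_nonneg (inv_nonneg.mpr (hspos p₀.1).le) (hApos p₀.1 j))
            calc ∑ j, ‖(((s p₀.1)⁻¹ * A p₀.1 j : ℝ) : ℂ) * v (j, p₀.2)‖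
                ≤ ∑ j, ((s p₀.1)⁻¹ * A p₀.1 j) * ‖v p₀‖ :=
                  Finset.sum_le_sum fun j _ => h1 j
              _ = ‖v p₀‖ := by
                  rw [← Finset.sum_mul, hrow p₀.1, one_mul]
    exact le_of_mul_le_mul_right (by linarith [key]) hvp₀
  · -- 1 is an eigenvalue
    have htr : ∑ k, Qf k k = (d : ℝ) - 1 := by
      simp [hQdef, Finset.sum_sub_distrib, ← sq, hsum2]
    have hk₀ : ∃ k : Fin d, Qf k k ≠ 0 := by
      by_contra h
      push_neg at h
      rw [Finset.sum_congr rfl fun k _ => h k, Finset.sum_const_zero] at htr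
      have h2 : (2:ℝ) ≤ (d:ℝ) := by exact_mod_cast hd
      linarith
    obtain ⟨k₀, hk₀⟩ := hk₀
    refine ⟨fun p => ((Qf p.2 k₀ : ℝ) : ℂ), ?_, ?_⟩
    · intro h
      have := congrFun h (⟨0, hn⟩, k₀)
      simp only [Pi.zero_apply, Complex.ofReal_eq_zero] at this
      exact hk₀ this
    · funext p
      rw [hmv]
      have : ∀ j, ∑ l, (((s p.1)⁻¹ * A p.1 j : ℝ) : ℂ) * ((Qf p.2 l : ℝ) : ℂ) *
          ((Qf l k₀ : ℝ) : ℂ) = (((s p.1)⁻¹ * A p.1 j : ℝ) : ℂ) * ((Qf p.2 k₀ : ℝ) : ℂ) := by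
        intro j
        rw [Finset.sum_congr rfl fun l _ => mul_assoc _ _ _, ← Finset.mul_sum]
        congr 1
        have := hQQ p.2 k₀
        push_cast [← this]
        norm_num
      rw [Finset.sum_congr rfl fun j _ => this j, ← Finset.sum_mul]
      have : ∑ j, (((s p.1)⁻¹ * A p.1 j : ℝ) : ℂ) = 1 := by
        exact_mod_cast hrow p.1
      rw [this, one_mul]


end
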